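/- (Iterated kernel bounds.) Let 0 < m < 1, λ ≥ 0, and let β : [0,∞) → (0,∞) be continuous and satisfy (ω₀/ω(0))(1+t)^{−m} ≤ β(t) ≤ (ω₁/ω(0))(1+t)^{−m} for all t ≥ 0, where 0 < ω₀ ≤ ω₁ and ω(0) > 0 are constants. Define p₁(t) := λ β(t)^{−1}, p₂(t) := λ β(t)^{−1} ∫₀ᵗ β(τ) dτ, and q(t,τ) := −λ² β(t)^{−1} ∫_τ^t β(s) ds. Then for every natural number l ≥ 1 and all t ≥ 0: ∫₀ᵗ |q(t,τ₁)| ∫₀^{τ₁} |q(τ₁,τ₂)| ⋯ ∫₀^{τ_{l−1}} |q(τ_{l−1},τ_l)| |p₁(τ_l)| dτ_l ⋯ dτ₁ ≤ (ω(0)/ω₀) λ (1+t)^m (1/(2l)!) (√(ω₁/ω₀) λ t)^{2l}, and ∫₀ᵗ |q(t,τ₁)| ∫₀^{τ₁} |q(τ₁,τ₂)| ⋯ ∫₀^{τ_{l−1}} |q(τ_{l−1},τ_l)| |p₂(τ_l)| dτ_l ⋯ dτ₁ ≤ (ω₁/(ω₀(1−m))) λ (1+t) (1/(2l)!) (√(ω₁/ω₀)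 λ t)^{2l}. -/

import Mathlib

/-- The `l`-fold iterated Volterra kernel applied to `p`:
`iterKernel q p l t = ∫₀ᵗ |q(t,τ₁)| ∫₀^{τ₁} |q(τ₁,τ₂)| ⋯ ∫₀^{τ_{l-1}} |q(τ_{l-1},τ_l)| |p(τ_l)| dτ_l ⋯ dτ₁`. -/
noncomputable def iterKernel (q : ℝ → ℝ → ℝ) (p : ℝ → ℝ) : ℕ → ℝ → ℝ
  | 0, t => |p t|
  | l + 1, t => ∫ τ in (0:ℝ)..t, |q t τ| * iterKernel q p l τ

private lemma iterKernel_nonneg (q : ℝ → ℝ → ℝ) (p : ℝ → ℝ) :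
    ∀ (l : ℕ) (t : ℝ), 0 ≤ t → 0 ≤ iterKernel q p l t := by
  intro l
  induction l with
  | zero => intro t _; exact abs_nonneg _
  | succ l ih =>
    intro t ht
    have h : iterKernel q p (l+1) t = ∫ τ in (0:ℝ)..t, |q t τ| * iterKernel q p l τ := rfl
    rw [h]
    exact intervalIntegral.integral_nonneg ht fun τ hτ =>
      mul_nonneg (abs_nonneg _) (ih τ hτ.1)

private lemma integral_le_of_nonneg_of_le {f g : ℝ → ℝ} {t : ℝ} (ht : 0 ≤ t)
    (hf : ∀ τ ∈ Set.Icc (0:ℝ) t, 0 ≤ f τ)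
    (hfg : ∀ τ ∈ Set.Icc (0:ℝ) t, f τ ≤ g τ)
    (hg : IntervalIntegrable g MeasureTheory.volume 0 t) :
    ∫ τ in (0:ℝ)..t, f τ ≤ ∫ τ in (0:ℝ)..t, g τ := by
  by_cases hfi : IntervalIntegrable f MeasureTheory.volume 0 t
  · exact intervalIntegral.integral_mono_on ht hfi hg hfg
  · rw [intervalIntegral.integral_undef hfi]
    exact intervalIntegral.integral_nonneg ht fun u hu => (hf u hu).trans (hfg u hu)

private lemma integral_sub_mul_pow (t : ℝ) (n : ℕ) :
    ∫ τ in (0:ℝ)..t, (t - τ) * τ ^ n = t ^ (n + 2) / (((n:ℝ) + 1) * ((n:ℝ) + 2)) := by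
  have h : (fun τ : ℝ => (t - τ) * τ ^ n) = fun τ => t * τ ^ n - τ ^ (n + 1) := by
    funext τ; ring
  rw [h, intervalIntegral.integral_sub (f := fun τ : ℝ => t * τ ^ n) (g := fun τ : ℝ => τ ^ (n + 1))
      ((continuous_const.mul (continuous_pow n)).intervalIntegrable _ _ :
        IntervalIntegrable (fun τ : ℝ => t * τ ^ n) MeasureTheory.volume 0 t)
      ((continuous_pow (n+1)).intervalIntegrable _ _ :
        IntervalIntegrable (fun τ : ℝ => τ ^ (n + 1)) MeasureTheory.volume 0 t),
    intervalIntegral.integral_const_mul, integral_pow, integral_pow]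
  have h1 : (n : ℝ) + 1 ≠ 0 := by positivity
  have h2 : (n : ℝ) + 2 ≠ 0 := by positivity
  push_cast
  field_simp
  ring

/-- Generic iterated-kernel estimate: if `|q(t,τ)| ≤ ν (1+t)^m (1+τ)^{-m} (t-τ)`,
`w` is a nonnegative weight compatible with the kernel, and `|p| ≤ c·w`, then the
`l`-fold iterate is bounded by `c · w(t) · μ^{2l} t^{2l}/(2l)!` where `μ² = ν`. -/
private lemma iter_bound (q : ℝ → ℝ → ℝ) (p w : ℝ → ℝ) (m c μ ν : ℝ)
    (hc : 0 ≤ c) (hν : 0 ≤ ν) (hμ0 : 0 ≤ μ) (hμ : μ ^ 2 = ν)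
    (hq : ∀ t τ : ℝ, 0 ≤ τ → τ ≤ t →
      |q t τ| ≤ ν * ((1 + t) ^ m * ((1 + τ) ^ (-m) * (t - τ))))
    (hw0 : ∀ τ : ℝ, 0 ≤ τ → 0 ≤ w τ)
    (hw : ∀ t τ : ℝ, 0 ≤ τ → τ ≤ t →
      (1 + t) ^ m * ((1 + τ) ^ (-m) * w τ) ≤ w t)
    (hbase : ∀ τ : ℝ, 0 ≤ τ → |p τ| ≤ c * w τ) :
    ∀ (l : ℕ) (t : ℝ), 0 ≤ t →
      iterKernel q p l t ≤ c * w t * (μ ^ (2*l) * t ^ (2*l) / ((2*l).factorial : ℝ)) := by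
  intro l
  induction l with
  | zero =>
    intro t ht
    simpa [iterKernel] using hbase t ht
  | succ l ih =>
    intro t ht
    have hfl : (0:ℝ) < ((2*l).factorial : ℝ) := by exact_mod_cast (2*l).factorial_pos
    set fl : ℝ := ((2*l).factorial : ℝ) with hfl_def
    set D : ℝ := ν * c * (μ ^ (2*l) / fl) with hD
    have hDnn : 0 ≤ D := by
      apply mul_nonneg (mul_nonneg hν hc)
      exact div_nonneg (pow_nonneg hμ0 _) hfl.le
    have heq : iterKernel q p (l+1) t = ∫ τ in (0:ℝ)..t, |q t τ| * iterKernel q p l τ := rfl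
    rw [heq]
    calc ∫ τ in (0:ℝ)..t, |q t τ| * iterKernel q p l τ
        ≤ ∫ τ in (0:ℝ)..t, (D * w t) * ((t - τ) * τ ^ (2*l)) := by
          apply integral_le_of_nonneg_of_le ht
          · intro τ hτ
            exact mul_nonneg (abs_nonneg _) (iterKernel_nonneg q p l τ hτ.1)
          · intro τ hτ
            obtain ⟨hτ0, hτt⟩ := hτ
            calc |q t τ| * iterKernel q p l τ
                ≤ (ν * ((1 + t) ^ m * ((1 + τ) ^ (-m) * (t - τ)))) *
                    (c * w τ * (μ ^ (2*l) * τ ^ (2*l) / fl)) := by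
                  apply mul_le_mul (hq t τ hτ0 hτt) (ih τ hτ0)
                    (iterKernel_nonneg q p l τ hτ0)
                  exact mul_nonneg hν (mul_nonneg (Real.rpow_nonneg (by linarith) _)
                    (mul_nonneg (Real.rpow_nonneg (by linarith) _) (by linarith)))
              _ = (D * ((1 + t) ^ m * ((1 + τ) ^ (-m) * w τ))) * ((t - τ) * τ ^ (2*l)) := by
                  rw [hD]; ring
              _ ≤ (D * w t) * ((t - τ) * τ ^ (2*l)) := by
                  apply mul_le_mul_of_nonneg_right
                    (mul_le_mul_of_nonneg_left (hw t τ hτ0 hτt) hDnn)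
                  exact mul_nonneg (by linarith) (pow_nonneg hτ0 _)
          · exact (continuous_const.mul
              ((continuous_const.sub continuous_id).mul (continuous_pow _))).intervalIntegrable _ _
      _ = (D * w t) * (t ^ (2*l + 2) / (((2*l : ℕ):ℝ) + 1) / (((2*l : ℕ):ℝ) + 2)) := by
          rw [intervalIntegral.integral_const_mul, integral_sub_mul_pow]
          simp only [div_eq_mul_inv, mul_inv]
          ring
      _ ≤ c * w t * (μ ^ (2*(l+1)) * t ^ (2*(l+1)) / ((2*(l+1)).factorial : ℝ)) := by
          apply le_of_eq
          have hfac : ((2*(l+1)).factorial : ℝ) = fl * (((2*l : ℕ):ℝ) + 1) * (((2*l : ℕ):ℝ) + 2) := by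
            have h2 : 2*(l+1) = (2*l + 1) + 1 := by ring
            rw [h2, Nat.factorial_succ, Nat.factorial_succ, hfl_def]
            push_cast; ring
          have hexp : 2*(l+1) = 2*l + 2 := by ring
          rw [hfac, hexp, pow_add, pow_add, hμ, hD]
          simp only [div_eq_mul_inv, mul_inv]
          ring

/-- Iterated kernel bounds. -/
theorem iterated_kernel_bounds
    (m lam ω₀ ω₁ ωz : ℝ)
    (hm0 : 0 < m) (hm1 : m < 1) (hlam : 0 ≤ lam)
    (hω₀ : 0 < ω₀) (hω : ω₀ ≤ ω₁) (hωz : 0 < ωz)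
    (β : ℝ → ℝ) (hβcont : Continuous β) (hβpos : ∀ t, 0 < β t)
    (hβlb : ∀ t, 0 ≤ t → ω₀ / ωz * (1 + t) ^ (-m) ≤ β t)
    (hβub : ∀ t, 0 ≤ t → β t ≤ ω₁ / ωz * (1 + t) ^ (-m)) :
    ∀ l : ℕ, 1 ≤ l → ∀ t : ℝ, 0 ≤ t →
      iterKernel (fun t' τ => -lam ^ 2 * (β t')⁻¹ * ∫ s in τ..t', β s)
          (fun τ => lam * (β τ)⁻¹) l t
        ≤ ωz / ω₀ * lam * (1 + t) ^ m *
            (1 / (Nat.factorial (2 * l) : ℝ)) * (Real.sqrt (ω₁ / ω₀) * lam * t) ^ (2 * l) ∧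
      iterKernel (fun t' τ => -lam ^ 2 * (β t')⁻¹ * ∫ s in τ..t', β s)
          (fun τ => lam * (β τ)⁻¹ * ∫ s in (0:ℝ)..τ, β s) l t
        ≤ ω₁ / (ω₀ * (1 - m)) * lam * (1 + t) *
            (1 / (Nat.factorial (2 * l) : ℝ)) * (Real.sqrt (ω₁ / ω₀) * lam * t) ^ (2 * l) := by
  have hω₁ : 0 < ω₁ := lt_of_lt_of_le hω₀ hω
  have h1m : (0:ℝ) < 1 - m := by linarith
  set μ : ℝ := Real.sqrt (ω₁ / ω₀) * lam with hμdef
  have hμ0 : 0 ≤ μ := mul_nonneg (Real.sqrt_nonneg _) hlam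
  have hμsq : μ ^ 2 = ω₁ / ω₀ * lam ^ 2 := by
    rw [hμdef, mul_pow, Real.sq_sqrt (by positivity)]
  -- inverse bound for β
  have hβinv : ∀ t : ℝ, 0 ≤ t → (β t)⁻¹ ≤ ωz / ω₀ * (1 + t) ^ m := by
    intro t ht
    have h1 : (0:ℝ) < ω₀ / ωz * (1 + t) ^ (-m) := by positivity
    calc (β t)⁻¹ ≤ (ω₀ / ωz * (1 + t) ^ (-m))⁻¹ := inv_anti₀ h1 (hβlb t ht)
      _ = ωz / ω₀ * (1 + t) ^ m := by
          rw [Real.rpow_neg (by linarith), mul_inv, inv_inv, inv_div]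
  -- kernel bound
  have hq : ∀ t τ : ℝ, 0 ≤ τ → τ ≤ t →
      |(fun t' τ => -lam ^ 2 * (β t')⁻¹ * ∫ s in τ..t', β s) t τ|
        ≤ (ω₁ / ω₀ * lam ^ 2) * ((1 + t) ^ m * ((1 + τ) ^ (-m) * (t - τ))) := by
    intro t τ hτ0 hτt
    have ht0 : 0 ≤ t := hτ0.trans hτt
    have hI0 : 0 ≤ ∫ s in τ..t, β s :=
      intervalIntegral.integral_nonneg hτt fun s _ => (hβpos s).le
    have habs : |(-lam ^ 2 * (β t)⁻¹ * ∫ s in τ..t, β s)|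
        = lam ^ 2 * (β t)⁻¹ * ∫ s in τ..t, β s := by
      rw [abs_mul, abs_mul, abs_neg, abs_of_nonneg (sq_nonneg lam),
        abs_of_pos (inv_pos.mpr (hβpos t)), abs_of_nonneg hI0]
    have hIb : ∫ s in τ..t, β s ≤ (ω₁ / ωz * (1 + τ) ^ (-m)) * (t - τ) := by
      calc ∫ s in τ..t, β s ≤ ∫ s in τ..t, ω₁ / ωz * (1 + τ) ^ (-m) := by
            apply intervalIntegral.integral_mono_on hτt (hβcont.intervalIntegrable τ t)
              intervalIntegrable_const
            intro s hs
            refine (hβub s (hτ0.trans hs.1)).trans (mul_le_mul_of_nonneg_left ?_ (by positivity))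
            exact Real.rpow_le_rpow_of_nonpos (by linarith) (by linarith [hs.1]) (by linarith)
        _ = (ω₁ / ωz * (1 + τ) ^ (-m)) * (t - τ) := by
            rw [intervalIntegral.integral_const, smul_eq_mul]; ring
    show |(-lam ^ 2 * (β t)⁻¹ * ∫ s in τ..t, β s)| ≤ _
    rw [habs]
    calc lam ^ 2 * (β t)⁻¹ * ∫ s in τ..t, β s
        ≤ lam ^ 2 * (ωz / ω₀ * (1 + t) ^ m) * ((ω₁ / ωz * (1 + τ) ^ (-m)) * (t - τ)) := by
          apply mul_le_mul (mul_le_mul_of_nonneg_left (hβinv t ht0) (sq_nonneg lam)) hIb hI0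
          have : (0:ℝ) ≤ (1 + t) ^ m := Real.rpow_nonneg (by linarith) _
          positivity
      _ = (ω₁ / ω₀ * lam ^ 2) * ((1 + t) ^ m * ((1 + τ) ^ (-m) * (t - τ))) := by
          field_simp
  -- bound for ∫₀^τ β
  have hIβ : ∀ τ : ℝ, 0 ≤ τ →
      (∫ s in (0:ℝ)..τ, β s) ≤ ω₁ / ωz * ((1 + τ) ^ (1 - m) / (1 - m)) := by
    intro τ hτ
    have hco : ContinuousOn (fun s : ℝ => ω₁ / ωz * (1 + s) ^ (-m)) (Set.uIcc 0 τ) := by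
      apply ContinuousOn.mul continuousOn_const
      apply ContinuousOn.rpow_const (f := fun s : ℝ => 1 + s) (by fun_prop)
      intro x hx
      rw [Set.uIcc_of_le hτ] at hx
      exact Or.inl (by have := hx.1; intro h; linarith)
    calc (∫ s in (0:ℝ)..τ, β s) ≤ ∫ s in (0:ℝ)..τ, ω₁ / ωz * (1 + s) ^ (-m) := by
          apply intervalIntegral.integral_mono_on hτ (hβcont.intervalIntegrable 0 τ)
            hco.intervalIntegrable
          intro s hs; exact hβub s hs.1
      _ = ω₁ / ωz * ∫ s in (0:ℝ)..τ, (1 + s) ^ (-m) := intervalIntegral.integral_const_mul _ _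
      _ = ω₁ / ωz * (((1 + τ) ^ (-m + 1) - 1) / (-m + 1)) := by
          rw [show (∫ s in (0:ℝ)..τ, (1 + s) ^ (-m)) = ∫ x in (1:ℝ)..(1 + τ), x ^ (-m) from by
                simpa using intervalIntegral.integral_comp_add_left (fun x : ℝ => x ^ (-m)) 1
                  (a := 0) (b := τ),
            integral_rpow (Or.inl (by linarith)), Real.one_rpow]
      _ ≤ ω₁ / ωz * ((1 + τ) ^ (1 - m) / (1 - m)) := by
          rw [show -m + 1 = 1 - m from by ring]
          have hnn : (0:ℝ) ≤ (1 + τ) ^ (1 - m) := Real.rpow_nonneg (by linarith) _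
          gcongr
          linarith
  intro l _ t ht
  constructor
  · -- first bound, weight w(t) = (1+t)^m
    have key := iter_bound (fun t' τ => -lam ^ 2 * (β t')⁻¹ * ∫ s in τ..t', β s)
      (fun τ => lam * (β τ)⁻¹) (fun t => (1 + t) ^ m) m (ωz / ω₀ * lam) μ (ω₁ / ω₀ * lam ^ 2)
      (by positivity) (by positivity) hμ0 hμsq hq
      (fun τ hτ => Real.rpow_nonneg (by linarith) _)
      (fun t τ hτ0 hτt => by
        have h1 : ((1:ℝ) + τ) ^ (-m) * (1 + τ) ^ m = 1 := by
          rw [← Real.rpow_add (by linarith), neg_add_cancel, Real.rpow_zero]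
        rw [h1, mul_one])
      (fun τ hτ => by
        have h0 : 0 ≤ lam * (β τ)⁻¹ := mul_nonneg hlam (inv_pos.mpr (hβpos τ)).le
        rw [abs_of_nonneg h0]
        calc lam * (β τ)⁻¹ ≤ lam * (ωz / ω₀ * (1 + τ) ^ m) :=
              mul_le_mul_of_nonneg_left (hβinv τ hτ) hlam
          _ = ωz / ω₀ * lam * (1 + τ) ^ m := by ring)
      l t ht
    refine key.trans (le_of_eq ?_)
    rw [mul_pow]
    ring
  · -- second bound, weight w(t) = 1 + t
    have key := iter_bound (fun t' τ => -lam ^ 2 * (β t')⁻¹ * ∫ s in τ..t', β s)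
      (fun τ => lam * (β τ)⁻¹ * ∫ s in (0:ℝ)..τ, β s) (fun t => 1 + t) m
      (ω₁ / (ω₀ * (1 - m)) * lam) μ (ω₁ / ω₀ * lam ^ 2)
      (by positivity) (by positivity) hμ0 hμsq hq
      (fun τ hτ => by show (0:ℝ) ≤ 1 + τ; linarith)
      (fun t τ hτ0 hτt => by
        have hp : (0:ℝ) < 1 + τ := by linarith
        have e1 : ((1:ℝ) + τ) ^ (-m) * (1 + τ) = (1 + τ) ^ (1 - m) := by
          rw [Real.rpow_sub hp, Real.rpow_one, Real.rpow_neg hp.le]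
          ring
        have e2 : ((1:ℝ) + τ) ^ (1 - m) ≤ (1 + t) ^ (1 - m) :=
          Real.rpow_le_rpow hp.le (by linarith) h1m.le
        calc (1 + t) ^ m * (((1:ℝ) + τ) ^ (-m) * (1 + τ))
            = (1 + t) ^ m * (1 + τ) ^ (1 - m) := by rw [e1]
          _ ≤ (1 + t) ^ m * (1 + t) ^ (1 - m) :=
              mul_le_mul_of_nonneg_left e2 (Real.rpow_nonneg (by linarith) _)
          _ = 1 + t := by
              rw [← Real.rpow_add (by linarith), show m + (1 - m) = 1 from by ring,
                Real.rpow_one])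
      (fun τ hτ => by
        have hI0 : 0 ≤ ∫ s in (0:ℝ)..τ, β s :=
          intervalIntegral.integral_nonneg hτ fun s _ => (hβpos s).le
        have h0 : 0 ≤ lam * (β τ)⁻¹ * ∫ s in (0:ℝ)..τ, β s :=
          mul_nonneg (mul_nonneg hlam (inv_pos.mpr (hβpos τ)).le) hI0
        rw [abs_of_nonneg h0]
        calc lam * (β τ)⁻¹ * ∫ s in (0:ℝ)..τ, β s
            ≤ lam * (ωz / ω₀ * (1 + τ) ^ m) * (ω₁ / ωz * ((1 + τ) ^ (1 - m) / (1 - m))) := by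
              apply mul_le_mul (mul_le_mul_of_nonneg_left (hβinv τ hτ) hlam) (hIβ τ hτ) hI0
              have : (0:ℝ) ≤ (1 + τ) ^ m := Real.rpow_nonneg (by linarith) _
              positivity
          _ = ω₁ / (ω₀ * (1 - m)) * lam * (1 + τ) := by
              have hab : ((1:ℝ) + τ) ^ m * (1 + τ) ^ (1 - m) = 1 + τ := by
                rw [← Real.rpow_add (by linarith), show m + (1 - m) = 1 from by ring,
                  Real.rpow_one]
              conv_rhs => rw [← hab]
              field_simp)
      l t ht
    refine key.trans (le_of_eq ?_)
    rw [mul_pow]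
    ring
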